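/- Let A : ℤ → M(d,ℝ) admit an exponential dichotomy on ℕ with regular projector P, constants K ≥ 1, α ∈ (0,1). Define M : ℓ_+^∞(ℝ^d) → ℓ_+^∞(ℝ^d) by (Mφ)(n) = ∑_{k=0}^{n−1} Φ(n,k+1)P(k+1)φ(k) − ∑_{k=n}^∞ Φ(n,k+1)(I−P(k+1))φ(k) for n ≥ 0 and (Mφ)(n) = 0 for n < 0 (where Φ(n,k+1) on ker P(k+1) for n < k+1 denotes the inverse of the restriction). Then M is well-defined, bounded with ‖Mφ‖_∞ ≤ K(1+α)/(1−α)·(1 + sup_k ‖P(k)‖)·‖φ‖_∞, and L⁺ ∘ M = id, so that L⁺ is surjective on ℓ_+^∞(ℝ^d). -/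

import Mathlib

/-- the Green's function operator `M` is well defined, bounded with the
stated norm estimate, and is a right inverse of `L⁺`, so `L⁺` is surjective on
`ℓ_+^∞(ℝ^d)`. Here `Ψ n m` encodes `Φ(n,m)(I-P(m))` for `n ≤ m`, i.e. the inverse of
the restriction of `Φ(m,n)` to `ker P(n)` composed with `I - P(m)`. -/
theorem stmt_7 {d : ℕ}
    (A : ℤ → (EuclideanSpace ℝ (Fin d) →L[ℝ] EuclideanSpace ℝ (Fin d)))
    (hA : ∃ C, ∀ n, ‖A n‖ ≤ C)
    (Φ : ℕ → ℕ → (EuclideanSpace ℝ (Fin d) →L[ℝ] EuclideanSpace ℝ (Fin d)))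
    (hΦ0 : ∀ n, Φ n n = 1)
    (hΦ1 : ∀ k n : ℕ, n ≤ k → Φ (k + 1) n = (A (k : ℤ)).comp (Φ k n))
    (P : ℕ → (EuclideanSpace ℝ (Fin d) →L[ℝ] EuclideanSpace ℝ (Fin d)))
    (hproj : ∀ n, (P n).comp (P n) = P n)
    (hinva : ∀ n : ℕ, (P (n + 1)).comp (A (n : ℤ)) = (A (n : ℤ)).comp (P n))
    (CP : ℝ) (hCP : ∀ n, ‖P n‖ ≤ CP)
    (hreg : ∀ n : ℕ, Set.BijOn (A (n : ℤ)) {x | P n x = 0} {x | P (n + 1) x = 0})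
    (K α : ℝ) (hK : 1 ≤ K) (hα : α ∈ Set.Ioo (0 : ℝ) 1)
    (hED1 : ∀ k n : ℕ, n ≤ k → ∀ x, ‖Φ k n (P n x)‖ ≤ K * α ^ (k - n) * ‖P n x‖)
    (hED2 : ∀ k n : ℕ, n ≤ k → ∀ x,
      ‖Φ k n (x - P n x)‖ ≥ (1 / K) * (1 / α) ^ (k - n) * ‖x - P n x‖)
    (Ψ : ℕ → ℕ → (EuclideanSpace ℝ (Fin d) →L[ℝ] EuclideanSpace ℝ (Fin d)))
    (hΨ1 : ∀ n m : ℕ, n ≤ m → ∀ x, Φ m n (Ψ n m x) = x - P m x)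
    (hΨ2 : ∀ n m : ℕ, n ≤ m → ∀ x, P n (Ψ n m x) = 0) :
    ∀ (φ : ℤ → EuclideanSpace ℝ (Fin d)) (Cφ : ℝ),
      (∀ n, ‖φ n‖ ≤ Cφ) → (∀ n : ℤ, n < 0 → φ n = 0) →
      (∀ n : ℕ, Summable fun k : ℕ => if n ≤ k then Ψ n (k + 1) (φ (k : ℤ)) else 0) ∧
      ∀ M : ℤ → EuclideanSpace ℝ (Fin d),
        (∀ n : ℤ, n < 0 → M n = 0) →
        (∀ n : ℕ, M (n : ℤ) =
          (∑ k ∈ Finset.range n, Φ n (k + 1) (P (k + 1) (φ (k : ℤ)))) -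
            ∑' k : ℕ, if n ≤ k then Ψ n (k + 1) (φ (k : ℤ)) else 0) →
        (∀ n : ℤ, ‖M n‖ ≤ K * (1 + α) / (1 - α) * (1 + CP) * Cφ) ∧
        (∀ n : ℕ, M ((n : ℤ) + 1) - A (n : ℤ) (M (n : ℤ)) = φ (n : ℤ)) := by
  intro φ Cφ hφ hφneg
  obtain ⟨hα0, hα1⟩ := hα
  have hK0 : (0:ℝ) < K := lt_of_lt_of_le one_pos hK
  have hCφ0 : 0 ≤ Cφ := le_trans (norm_nonneg _) (hφ 0)
  have hCP0 : 0 ≤ CP := le_trans (norm_nonneg _) (hCP 0)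
  have h1α : (0:ℝ) < 1 - α := by linarith
  have hβ : (0:ℝ) < (1 - α)⁻¹ := by positivity
  -- bound on Ψ
  have hΨb : ∀ n m : ℕ, n ≤ m → ∀ x, ‖Ψ n m x‖ ≤ K * α ^ (m - n) * ((1 + CP) * ‖x‖) := by
    intro n m hnm x
    have h1 := hED2 m n hnm (Ψ n m x)
    rw [hΨ2 n m hnm x, sub_zero, hΨ1 n m hnm x] at h1
    have h2 : ‖x - P m x‖ ≤ (1 + CP) * ‖x‖ := by
      calc ‖x - P m x‖ ≤ ‖x‖ + ‖P m x‖ := norm_sub_le _ _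
        _ ≤ ‖x‖ + CP * ‖x‖ := by
            have := (P m).le_of_opNorm_le (hCP m) x
            linarith
        _ = (1 + CP) * ‖x‖ := by ring
    have h3 : ‖Ψ n m x‖ ≤ K * α ^ (m - n) * ‖x - P m x‖ := by
      have e : ‖Ψ n m x‖ = (K * α ^ (m - n)) * ((1/K) * (1/α) ^ (m - n) * ‖Ψ n m x‖) := by
        field_simp
        rw [mul_assoc, ← mul_pow, mul_one_div_cancel hα0.ne', one_pow, mul_one]
      rw [e]
      exact mul_le_mul_of_nonneg_left h1 (by positivity)
    calc ‖Ψ n m x‖ ≤ K * α ^ (m - n) * ‖x - P m x‖ := h3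
      _ ≤ K * α ^ (m - n) * ((1 + CP) * ‖x‖) :=
          mul_le_mul_of_nonneg_left h2 (by positivity)
  -- geometric bound on each term of the series
  have hterm : ∀ n k : ℕ, ‖(if n ≤ k then Ψ n (k+1) (φ (k:ℤ)) else 0)‖ ≤
      (K * (1+CP) * Cφ * α * (α ^ n)⁻¹) * α ^ k := by
    intro n k
    by_cases h : n ≤ k
    · simp only [h, if_true]
      calc ‖Ψ n (k+1) (φ (k:ℤ))‖ ≤ K * α ^ (k+1-n) * ((1 + CP) * ‖φ (k:ℤ)‖) :=
            hΨb n (k+1) (h.trans (Nat.le_succ k)) _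
        _ ≤ K * α ^ (k+1-n) * ((1 + CP) * Cφ) := by
            refine mul_le_mul_of_nonneg_left ?_ (by positivity)
            have := hφ (k:ℤ); nlinarith
        _ = (K * (1+CP) * Cφ * α * (α ^ n)⁻¹) * α ^ k := by
            rw [Nat.succ_sub h, pow_succ, pow_sub₀ α hα0.ne' h]; ring
    · simp only [h, if_false, norm_zero]
      positivity
  have hgeom : ∀ n : ℕ, Summable (fun k : ℕ => (K * (1+CP) * Cφ * α * (α ^ n)⁻¹) * α ^ k) :=
    fun n => (summable_geometric_of_lt_one hα0.le hα1).mul_left _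
  have hsum : ∀ n : ℕ, Summable (fun k : ℕ => if n ≤ k then Ψ n (k+1) (φ (k:ℤ)) else 0) :=
    fun n => Summable.of_norm_bounded (hgeom n) (hterm n)
  have hsumnorm : ∀ n : ℕ,
      Summable (fun k : ℕ => ‖(if n ≤ k then Ψ n (k+1) (φ (k:ℤ)) else 0)‖) :=
    fun n => Summable.of_nonneg_of_le (fun _ => norm_nonneg _) (hterm n) (hgeom n)
  refine ⟨hsum, ?_⟩
  intro M hMneg hM
  -- refined bound used for the tsum estimate
  have hh : ∀ n : ℕ, ∀ k : ℕ, ‖(if n ≤ k then Ψ n (k+1) (φ (k:ℤ)) else 0)‖ ≤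
      (if n ≤ k then (K * (1+CP) * Cφ * α) * α ^ (k - n) else 0) := by
    intro n k
    by_cases h : n ≤ k
    · simp only [h, if_true]
      calc ‖Ψ n (k+1) (φ (k:ℤ))‖ ≤ K * α ^ (k+1-n) * ((1 + CP) * ‖φ (k:ℤ)‖) :=
            hΨb n (k+1) (h.trans (Nat.le_succ k)) _
        _ ≤ K * α ^ (k+1-n) * ((1 + CP) * Cφ) := by
            refine mul_le_mul_of_nonneg_left ?_ (by positivity)
            have := hφ (k:ℤ); nlinarith
        _ = (K * (1+CP) * Cφ * α) * α ^ (k - n) := by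
            rw [Nat.succ_sub h, pow_succ]; ring
    · simp [h]
  have hhsum : ∀ n : ℕ,
      Summable (fun k : ℕ => if n ≤ k then (K * (1+CP) * Cφ * α) * α ^ (k - n) else 0) := by
    intro n
    refine Summable.of_nonneg_of_le (fun k => ?_) (fun k => ?_) (hgeom n)
    · by_cases h : n ≤ k <;> simp [h] <;> positivity
    · by_cases h : n ≤ k
      · simp only [h, if_true]
        rw [pow_sub₀ α hα0.ne' h]; ring_nf; rfl
      · simp only [h, if_false]
        positivity
  have hhtsum : ∀ n : ℕ,
      (∑' k : ℕ, if n ≤ k then (K * (1+CP) * Cφ * α) * α ^ (k - n) else 0)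
        = (K * (1+CP) * Cφ * α) * (1 - α)⁻¹ := by
    intro n
    have h0 := Summable.sum_add_tsum_nat_add (f := fun k : ℕ =>
      if n ≤ k then (K * (1+CP) * Cφ * α) * α ^ (k - n) else 0) n (hhsum n)
    have h1 : (∑ i ∈ Finset.range n,
        if n ≤ i then (K * (1+CP) * Cφ * α) * α ^ (i - n) else 0) = 0 := by
      refine Finset.sum_eq_zero fun i hi => ?_
      have : ¬ n ≤ i := not_le.mpr (Finset.mem_range.mp hi)
      simp [this]
    have h2 : (∑' i : ℕ, if n ≤ i + n then (K * (1+CP) * Cφ * α) * α ^ (i + n - n) else 0)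
        = (K * (1+CP) * Cφ * α) * (1 - α)⁻¹ := by
      have : (fun i : ℕ => if n ≤ i + n then (K * (1+CP) * Cφ * α) * α ^ (i + n - n) else 0)
          = fun i : ℕ => (K * (1+CP) * Cφ * α) * α ^ i := by
        funext i
        simp [Nat.le_add_left, Nat.add_sub_cancel]
      rw [this, tsum_mul_left, tsum_geometric_of_lt_one hα0.le hα1]
    rw [h1, h2, zero_add] at h0
    exact h0.symm
  have hTbound : ∀ n : ℕ,
      ‖∑' k : ℕ, if n ≤ k then Ψ n (k+1) (φ (k:ℤ)) else 0‖ ≤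
        (K * (1+CP) * Cφ * α) * (1 - α)⁻¹ := by
    intro n
    calc ‖∑' k : ℕ, if n ≤ k then Ψ n (k+1) (φ (k:ℤ)) else 0‖
        ≤ ∑' k : ℕ, ‖(if n ≤ k then Ψ n (k+1) (φ (k:ℤ)) else 0)‖ :=
          norm_tsum_le_tsum_norm (hsumnorm n)
      _ ≤ ∑' k : ℕ, (if n ≤ k then (K * (1+CP) * Cφ * α) * α ^ (k - n) else 0) :=
          Summable.tsum_le_tsum (hh n) (hsumnorm n) (hhsum n)
      _ = (K * (1+CP) * Cφ * α) * (1 - α)⁻¹ := hhtsum n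
  have hSbound : ∀ n : ℕ,
      ‖∑ k ∈ Finset.range n, Φ n (k + 1) (P (k + 1) (φ (k : ℤ)))‖ ≤
        (K * CP * Cφ) * (1 - α)⁻¹ := by
    intro n
    calc ‖∑ k ∈ Finset.range n, Φ n (k + 1) (P (k + 1) (φ (k : ℤ)))‖
        ≤ ∑ k ∈ Finset.range n, ‖Φ n (k + 1) (P (k + 1) (φ (k : ℤ)))‖ :=
          norm_sum_le _ _
      _ ≤ ∑ k ∈ Finset.range n, (K * CP * Cφ) * α ^ (n - (k+1)) := by
          refine Finset.sum_le_sum fun k hk => ?_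
          have hkn : k + 1 ≤ n := Finset.mem_range.mp hk
          calc ‖Φ n (k + 1) (P (k + 1) (φ (k : ℤ)))‖
              ≤ K * α ^ (n - (k+1)) * ‖P (k+1) (φ (k:ℤ))‖ := hED1 n (k+1) hkn _
            _ ≤ K * α ^ (n - (k+1)) * (CP * Cφ) := by
                refine mul_le_mul_of_nonneg_left ?_ (by positivity)
                have h1 := (P (k+1)).le_of_opNorm_le (hCP (k+1)) (φ (k:ℤ))
                have h2 := hφ (k:ℤ)
                nlinarith [norm_nonneg (φ (k:ℤ))]
            _ = (K * CP * Cφ) * α ^ (n - (k+1)) := by ring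
      _ = (K * CP * Cφ) * ∑ k ∈ Finset.range n, α ^ (n - (k+1)) := by
          rw [Finset.mul_sum]
      _ ≤ (K * CP * Cφ) * (1 - α)⁻¹ := by
          refine mul_le_mul_of_nonneg_left ?_ (by positivity)
          have e : (∑ k ∈ Finset.range n, α ^ (n - (k+1))) = ∑ k ∈ Finset.range n, α ^ k := by
            rw [← Finset.sum_range_reflect (fun j => α ^ j) n]
            refine Finset.sum_congr rfl fun k hk => ?_
            congr 1
            omega
          rw [e, ← tsum_geometric_of_lt_one hα0.le hα1]
          exact Summable.sum_le_tsum _ (fun i _ => by positivity)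
            (summable_geometric_of_lt_one hα0.le hα1)
  constructor
  · -- norm bound
    intro n
    rcases lt_or_ge n 0 with hn | hn
    · rw [hMneg n hn, norm_zero]
      have : (0:ℝ) ≤ K * (1 + α) / (1 - α) := by positivity
      have h1 : (0:ℝ) ≤ 1 + CP := by linarith
      have := mul_nonneg (mul_nonneg this h1) hCφ0
      linarith
    · obtain ⟨m, rfl⟩ := Int.eq_ofNat_of_zero_le hn
      rw [hM m]
      calc ‖(∑ k ∈ Finset.range m, Φ m (k + 1) (P (k + 1) (φ (k : ℤ)))) -
            ∑' k : ℕ, if m ≤ k then Ψ m (k + 1) (φ (k : ℤ)) else 0‖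
          ≤ ‖∑ k ∈ Finset.range m, Φ m (k + 1) (P (k + 1) (φ (k : ℤ)))‖ +
            ‖∑' k : ℕ, if m ≤ k then Ψ m (k + 1) (φ (k : ℤ)) else 0‖ := norm_sub_le _ _
        _ ≤ (K * CP * Cφ) * (1 - α)⁻¹ + (K * (1+CP) * Cφ * α) * (1 - α)⁻¹ :=
            add_le_add (hSbound m) (hTbound m)
        _ = (K * Cφ * (1 - α)⁻¹) * (CP + α + α * CP) := by ring
        _ ≤ (K * Cφ * (1 - α)⁻¹) * (1 + α + CP + α * CP) := by
            refine mul_le_mul_of_nonneg_left (by linarith) (by positivity)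
        _ = K * (1 + α) / (1 - α) * (1 + CP) * Cφ := by
            field_simp
            ring
  · -- right inverse identity
    intro n
    have hΦsucc : ∀ m : ℕ, Φ (m+1) m = A (m:ℤ) := by
      intro m
      rw [hΦ1 m m le_rfl, hΦ0]
      rfl
    -- cocycle property
    have hcoc : ∀ m : ℕ, n + 1 ≤ m → ∀ x, Φ m (n+1) (A (n:ℤ) x) = Φ m n x := by
      intro m hm
      induction m, hm using Nat.le_induction with
      | base => intro x; rw [hΦ0, hΦsucc]; rfl
      | succ m hm ih =>
          intro x
          rw [hΦ1 m (n+1) hm, hΦ1 m n (le_trans (Nat.le_succ n) hm)]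
          simp only [ContinuousLinearMap.comp_apply]
          rw [ih x]
    -- injectivity on the kernel of P
    have hinj : ∀ m k : ℕ, k ≤ m → ∀ y : EuclideanSpace ℝ (Fin d),
        P k y = 0 → Φ m k y = 0 → y = 0 := by
      intro m k hkm y hPy hΦy
      have h1 := hED2 m k hkm y
      rw [hPy, sub_zero, hΦy, norm_zero] at h1
      have h2 : (0:ℝ) < (1/K) * (1/α) ^ (m-k) := by positivity
      have h3 : ‖y‖ ≤ 0 := by nlinarith [norm_nonneg y]
      exact norm_le_zero_iff.mp h3
    -- A maps Ψ n m to Ψ (n+1) m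
    have hAΨ : ∀ m : ℕ, n + 1 ≤ m → ∀ x, A (n:ℤ) (Ψ n m x) = Ψ (n+1) m x := by
      intro m hm x
      have hnm : n ≤ m := le_trans (Nat.le_succ n) hm
      have hker : P (n+1) (A (n:ℤ) (Ψ n m x) - Ψ (n+1) m x) = 0 := by
        rw [map_sub, hΨ2 (n+1) m hm x, sub_zero]
        have := congrArg (fun L => L (Ψ n m x)) (hinva n)
        simp only [ContinuousLinearMap.comp_apply] at this
        rw [this, hΨ2 n m hnm x, map_zero]
      have hΦeq : Φ m (n+1) (A (n:ℤ) (Ψ n m x) - Ψ (n+1) m x) = 0 := by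
        rw [map_sub, hcoc m hm (Ψ n m x), hΨ1 n m hnm x, hΨ1 (n+1) m hm x, sub_self]
      have := hinj m (n+1) hm _ hker hΦeq
      exact sub_eq_zero.mp this
    have hAΨn : ∀ x, A (n:ℤ) (Ψ n (n+1) x) = x - P (n+1) x := by
      intro x
      have := hΨ1 n (n+1) (Nat.le_succ n) x
      rw [hΦsucc n] at this
      exact this
    -- compute A n (S n)
    have hScomp : A (n:ℤ) (∑ k ∈ Finset.range n, Φ n (k + 1) (P (k + 1) (φ (k : ℤ)))) =
        (∑ k ∈ Finset.range (n+1), Φ (n+1) (k + 1) (P (k + 1) (φ (k : ℤ)))) -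
          P (n+1) (φ (n:ℤ)) := by
      rw [map_sum, Finset.sum_range_succ, hΦ0, ContinuousLinearMap.one_apply,
        add_sub_cancel_right]
      refine Finset.sum_congr rfl fun k hk => ?_
      have hkn : k + 1 ≤ n := Finset.mem_range.mp hk
      rw [hΦ1 n (k+1) hkn]
      rfl
    -- compute A n (T n)
    have hTcomp : A (n:ℤ) (∑' k : ℕ, if n ≤ k then Ψ n (k + 1) (φ (k : ℤ)) else 0) =
        (∑' k : ℕ, if n + 1 ≤ k then Ψ (n+1) (k + 1) (φ (k : ℤ)) else 0) +
          (φ (n:ℤ) - P (n+1) (φ (n:ℤ))) := by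
      have h0 : A (n:ℤ) (∑' k : ℕ, if n ≤ k then Ψ n (k + 1) (φ (k : ℤ)) else 0) =
          ∑' k : ℕ, A (n:ℤ) (if n ≤ k then Ψ n (k + 1) (φ (k : ℤ)) else 0) :=
        (((hsum n).hasSum.mapL (A (n:ℤ))).tsum_eq).symm
      rw [h0]
      have h1 : (fun k : ℕ => A (n:ℤ) (if n ≤ k then Ψ n (k + 1) (φ (k : ℤ)) else 0)) =
          fun k : ℕ => (if n + 1 ≤ k then Ψ (n+1) (k + 1) (φ (k : ℤ)) else 0) +
            (if k = n then (φ (n:ℤ) - P (n+1) (φ (n:ℤ))) else 0) := by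
        funext k
        rcases lt_trichotomy k n with h | h | h
        · have h2 : ¬ n ≤ k := not_le.mpr h
          have h3 : ¬ n + 1 ≤ k := by omega
          have h4 : k ≠ n := Nat.ne_of_lt h
          simp [h2, h3, h4]
        · subst h
          have h2 : ¬ k + 1 ≤ k := by omega
          simp only [le_refl, if_true, h2, if_false, if_pos rfl, zero_add]
          exact hAΨn (φ (k:ℤ))
        · have h2 : n ≤ k := h.le
          have h3 : n + 1 ≤ k := h
          have h4 : k ≠ n := Nat.ne_of_gt h
          simp only [h2, if_true, h3, h4, if_false, add_zero]
          exact hAΨ (k+1) (by omega) (φ (k:ℤ))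
      rw [h1]
      have hδ : Summable (fun k : ℕ =>
          if k = n then (φ (n:ℤ) - P (n+1) (φ (n:ℤ))) else 0) := by
        refine summable_of_ne_finset_zero (s := {n}) fun k hk => ?_
        have : k ≠ n := by simpa using hk
        simp [this]
      rw [Summable.tsum_add (hsum (n+1)) hδ, tsum_ite_eq]
    -- combine
    have hgoal : M (((n+1 : ℕ)):ℤ) - A (n:ℤ) (M (n:ℤ)) = φ (n:ℤ) := by
      rw [hM (n+1), hM n, map_sub, hScomp, hTcomp]
      abel
    have hcast : ((n:ℤ) + 1) = (((n+1:ℕ)):ℤ) := by push_cast; ring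
    rw [hcast]
    exact hgoal
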